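/- For square-integrable real random variables X, Y on a probability space, E[|XY|] ≤ (1/2)·‖X‖₂·‖Y‖₂ + (1/2)·√(‖X‖₂²·‖Y‖₂² − (E[|X|]·σ_{|Y|} − E[|Y|]·σ_{|X|})²), where σ_{|X|} and σ_{|Y|} are the standard deviations of |X| and |Y| and ‖X‖₂ = √(E[X²]). -/

import Mathlib

open MeasureTheory

private lemma aux_int_mul {Ω : Type*} [MeasurableSpace Ω] {μ : Measure Ω}
    {f g : Ω → ℝ} (hf : MemLp f 2 μ) (hg : MemLp g 2 μ) :
    Integrable (fun ω => f ω * g ω) μ := by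
  refine Integrable.mono' ((hf.integrable_sq.add hg.integrable_sq).const_mul (1/2))
    (hf.1.mul hg.1) (Filter.Eventually.of_forall fun ω => ?_)
  simp only [Pi.add_apply]
  rw [Real.norm_eq_abs, abs_mul]
  nlinarith [sq_nonneg (|f ω| - |g ω|), sq_abs (f ω), sq_abs (g ω),
    abs_nonneg (f ω), abs_nonneg (g ω)]

private lemma aux_cs {Ω : Type*} [MeasurableSpace Ω] (μ : Measure Ω)
    (f g : Ω → ℝ) (hf : MemLp f 2 μ) (hg : MemLp g 2 μ) :
    ∫ ω, f ω * g ω ∂μ ≤ Real.sqrt (∫ ω, f ω ^ 2 ∂μ) * Real.sqrt (∫ ω, g ω ^ 2 ∂μ) := by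
  have hpq : (2:ℝ).HolderConjugate 2 := Real.HolderConjugate.two_two
  have h2 : ENNReal.ofReal (2:ℝ) = 2 := by norm_num
  have hfa : MemLp (fun ω => |f ω|) (ENNReal.ofReal (2:ℝ)) μ := by
    rw [h2]; simpa [Real.norm_eq_abs] using hf.norm
  have hga : MemLp (fun ω => |g ω|) (ENNReal.ofReal (2:ℝ)) μ := by
    rw [h2]; simpa [Real.norm_eq_abs] using hg.norm
  have key := integral_mul_le_Lp_mul_Lq_of_nonneg hpq
      (Filter.Eventually.of_forall fun ω => abs_nonneg (f ω))
      (Filter.Eventually.of_forall fun ω => abs_nonneg (g ω)) hfa hga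
  have erw : ∀ h : Ω → ℝ, (∫ ω, |h ω| ^ (2:ℝ) ∂μ) = ∫ ω, h ω ^ 2 ∂μ := by
    intro h
    congr 1; funext ω
    rw [show (2:ℝ) = ((2:ℕ):ℝ) by norm_num, Real.rpow_natCast, sq_abs]
  rw [erw f, erw g] at key
  have habs : MemLp (fun ω => |f ω|) 2 μ := by rw [← h2]; exact hfa
  have hgabs : MemLp (fun ω => |g ω|) 2 μ := by rw [← h2]; exact hga
  have hmono : ∫ ω, f ω * g ω ∂μ ≤ ∫ ω, |f ω| * |g ω| ∂μ := by
    refine integral_mono (aux_int_mul hf hg) (aux_int_mul habs hgabs) fun ω => ?_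
    calc f ω * g ω ≤ |f ω * g ω| := le_abs_self _
      _ = |f ω| * |g ω| := abs_mul _ _
  rw [Real.sqrt_eq_rpow, Real.sqrt_eq_rpow]
  exact hmono.trans key

set_option maxHeartbeats 1000000 in
theorem stmt18 {Ω : Type*} [MeasurableSpace Ω] (μ : Measure Ω) [IsProbabilityMeasure μ]
    (X Y : Ω → ℝ) (hX : MemLp X 2 μ) (hY : MemLp Y 2 μ) :
    (∫ ω, |X ω * Y ω| ∂μ)
      ≤ (1 / 2) * Real.sqrt (∫ ω, X ω ^ 2 ∂μ) * Real.sqrt (∫ ω, Y ω ^ 2 ∂μ)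
        + (1 / 2) * Real.sqrt ((∫ ω, X ω ^ 2 ∂μ) * (∫ ω, Y ω ^ 2 ∂μ)
            - ((∫ ω, |X ω| ∂μ) * Real.sqrt ((∫ ω, Y ω ^ 2 ∂μ) - (∫ ω, |Y ω| ∂μ) ^ 2)
               - (∫ ω, |Y ω| ∂μ) * Real.sqrt ((∫ ω, X ω ^ 2 ∂μ) - (∫ ω, |X ω| ∂μ) ^ 2)) ^ 2) := by
  set a := ∫ ω, |X ω| ∂μ with ha_def
  set b := ∫ ω, |Y ω| ∂μ with hb_def
  set A := ∫ ω, X ω ^ 2 ∂μ with hA_def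
  set B := ∫ ω, Y ω ^ 2 ∂μ with hB_def
  have hXa : MemLp (fun ω => |X ω|) 2 μ := by simpa [Real.norm_eq_abs] using hX.norm
  have hYa : MemLp (fun ω => |Y ω|) 2 μ := by simpa [Real.norm_eq_abs] using hY.norm
  have ha0 : 0 ≤ a := integral_nonneg fun ω => abs_nonneg _
  have hb0 : 0 ≤ b := integral_nonneg fun ω => abs_nonneg _
  have hA0 : 0 ≤ A := integral_nonneg fun ω => sq_nonneg _
  have hB0 : 0 ≤ B := integral_nonneg fun ω => sq_nonneg _
  have hX1 : Integrable (fun ω => |X ω|) μ := hXa.integrable one_le_two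
  have hY1 : Integrable (fun ω => |Y ω|) μ := hYa.integrable one_le_two
  have hX2 : Integrable (fun ω => |X ω| ^ 2) μ := hXa.integrable_sq
  have hY2 : Integrable (fun ω => |Y ω| ^ 2) μ := hYa.integrable_sq
  -- mean square bounds
  have sqle : ∀ (f : Ω → ℝ), MemLp f 2 μ → (0 ≤ ∫ ω, |f ω| ∂μ) →
      (∫ ω, |f ω| ∂μ) ^ 2 ≤ ∫ ω, f ω ^ 2 ∂μ := by
    intro f hf hnn
    have habs : MemLp (fun ω => |f ω|) 2 μ := by simpa [Real.norm_eq_abs] using hf.norm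
    have h1 : MemLp (fun _ : Ω => (1:ℝ)) 2 μ := memLp_const 1
    have := aux_cs μ (fun ω => |f ω|) (fun _ => 1) habs h1
    simp only [mul_one, one_pow, integral_const, measure_univ, probReal_univ, ENNReal.toReal_one, smul_eq_mul,
      Real.sqrt_one, sq_abs] at this
    have h2 : (∫ ω, |f ω| ∂μ) ^ 2 ≤ Real.sqrt (∫ ω, f ω ^ 2 ∂μ) ^ 2 :=
      pow_le_pow_left₀ hnn this 2
    rwa [Real.sq_sqrt (integral_nonneg fun ω => sq_nonneg _)] at h2
  have haA : a ^ 2 ≤ A := sqle X hX ha0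
  have hbB : b ^ 2 ≤ B := sqle Y hY hb0
  -- centered functions
  have hXc : MemLp (fun ω => |X ω| - a) 2 μ := hXa.sub (memLp_const a)
  have hYc : MemLp (fun ω => |Y ω| - b) 2 μ := hYa.sub (memLp_const b)
  have hPI : Integrable (fun ω => |X ω| * |Y ω|) μ := aux_int_mul hXa hYa
  have eX : (∫ ω, (|X ω| - a) ^ 2 ∂μ) = A - a ^ 2 := by
    have : ∀ ω, (|X ω| - a) ^ 2 = |X ω| ^ 2 - (2*a) * |X ω| + a ^ 2 := fun ω => by ring
    simp_rw [this]
    have i1 : Integrable (fun ω => (2*a) * |X ω|) μ := hX1.const_mul _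
    have i2 : Integrable (fun ω => |X ω| ^ 2 - (2*a) * |X ω|) μ := hX2.sub i1
    rw [integral_add i2 (integrable_const _),
      integral_sub hX2 i1, integral_const_mul, integral_const]
    simp only [measure_univ, probReal_univ, ENNReal.toReal_one, smul_eq_mul, one_mul]
    have hsq : (∫ ω, |X ω| ^ 2 ∂μ) = A := by rw [hA_def]; congr 1; funext ω; rw [sq_abs]
    rw [hsq, ← ha_def]; ring
  have eY : (∫ ω, (|Y ω| - b) ^ 2 ∂μ) = B - b ^ 2 := by
    have : ∀ ω, (|Y ω| - b) ^ 2 = |Y ω| ^ 2 - (2*b) * |Y ω| + b ^ 2 := fun ω => by ring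
    simp_rw [this]
    have i1 : Integrable (fun ω => (2*b) * |Y ω|) μ := hY1.const_mul _
    have i2 : Integrable (fun ω => |Y ω| ^ 2 - (2*b) * |Y ω|) μ := hY2.sub i1
    rw [integral_add i2 (integrable_const _),
      integral_sub hY2 i1, integral_const_mul, integral_const]
    simp only [measure_univ, probReal_univ, ENNReal.toReal_one, smul_eq_mul, one_mul]
    have hsq : (∫ ω, |Y ω| ^ 2 ∂μ) = B := by rw [hB_def]; congr 1; funext ω; rw [sq_abs]
    rw [hsq, ← hb_def]; ring
  have eXY : (∫ ω, (|X ω| - a) * (|Y ω| - b) ∂μ)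
      = (∫ ω, |X ω| * |Y ω| ∂μ) - a * b := by
    have : ∀ ω, (|X ω| - a) * (|Y ω| - b)
        = |X ω| * |Y ω| - b * |X ω| - a * |Y ω| + a * b := fun ω => by ring
    simp_rw [this]
    have i1 : Integrable (fun ω => b * |X ω|) μ := hX1.const_mul _
    have i2 : Integrable (fun ω => a * |Y ω|) μ := hY1.const_mul _
    have i3 : Integrable (fun ω => |X ω| * |Y ω| - b * |X ω|) μ := hPI.sub i1
    have i4 : Integrable (fun ω => |X ω| * |Y ω| - b * |X ω| - a * |Y ω|) μ := i3.sub i2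
    rw [integral_add i4 (integrable_const _), integral_sub i3 i2,
      integral_sub hPI i1, integral_const_mul, integral_const_mul, integral_const]
    simp only [measure_univ, probReal_univ, ENNReal.toReal_one, smul_eq_mul, one_mul]
    rw [← ha_def, ← hb_def]; ring
  have hcs := aux_cs μ _ _ hXc hYc
  rw [eX, eY, eXY] at hcs
  set sX := Real.sqrt (A - a ^ 2) with hsX_def
  set sY := Real.sqrt (B - b ^ 2) with hsY_def
  have hsX0 : 0 ≤ sX := Real.sqrt_nonneg _
  have hsY0 : 0 ≤ sY := Real.sqrt_nonneg _
  have hsX2 : sX ^ 2 = A - a ^ 2 := Real.sq_sqrt (by linarith)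
  have hsY2 : sY ^ 2 = B - b ^ 2 := Real.sq_sqrt (by linarith)
  have hA' : A = a ^ 2 + sX ^ 2 := by rw [hsX2]; ring
  have hB' : B = b ^ 2 + sY ^ 2 := by rw [hsY2]; ring
  have hid : A * B - (a * sY - b * sX) ^ 2 = (a * b + sX * sY) ^ 2 := by
    rw [hA', hB']; ring
  have habs : (∫ ω, |X ω * Y ω| ∂μ) = ∫ ω, |X ω| * |Y ω| ∂μ := by
    congr 1; funext ω; rw [abs_mul]
  have hM : (∫ ω, |X ω * Y ω| ∂μ) ≤ a * b + sX * sY := by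
    rw [habs]; linarith
  rw [hid, Real.sqrt_sq (by positivity : (0:ℝ) ≤ a * b + sX * sY)]
  have hAB : a * b + sX * sY ≤ Real.sqrt A * Real.sqrt B := by
    have h1 : (a * b + sX * sY) ^ 2 ≤ (Real.sqrt A * Real.sqrt B) ^ 2 := by
      rw [mul_pow, Real.sq_sqrt hA0, Real.sq_sqrt hB0]
      nlinarith [sq_nonneg (a * sY - b * sX)]
    have h2 : 0 ≤ Real.sqrt A * Real.sqrt B := by positivity
    nlinarith [sq_nonneg (a * b + sX * sY - Real.sqrt A * Real.sqrt B)]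
  linarith
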